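/- Let K be a field, A an associative unital K-algebra, and V, W finite-dimensional K-vector spaces. In the K-algebra B = End(V) ⊗ End(W) ⊗ A, write X₁₂ = X ⊗ 1_A for X ∈ End(V) ⊗ End(W); write S₁₃ for the image of S ∈ End(V) ⊗ A under the algebra embedding x ⊗ a ↦ x ⊗ 1 ⊗ a, and T₂₃ for the image of T ∈ End(W) ⊗ A under y ⊗ a ↦ 1 ⊗ y ⊗ a. Let τ_V : End(V) ⊗ A → A be the linear map induced by x ⊗ a ↦ tr(x)·a, and similarly τ_W : End(W) ⊗ A → A. If X is invertible in End(V) ⊗ End(W) and X₁₂ · S₁₃ · T₂₃ = T₂₃ · S₁₃ · X₁₂ holds in B, then τ_V(S) · τ_W(T) = τ_W(T) · τ_V(S) in A. -/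

import Mathlib

open TensorProduct

set_option maxSynthPendingDepth 3

section

variable (K : Type*) [Field K] (A : Type*) [Ring A] [Algebra K A]
variable (V W : Type*) [AddCommGroup V] [Module K V] [AddCommGroup W] [Module K W]

/-- `X₁₂ = X ⊗ 1_A` : the embedding `End(V) ⊗ End(W) → End(V) ⊗ End(W) ⊗ A`. -/
noncomputable def emb12 :
    (Module.End K V ⊗[K] Module.End K W) →ₐ[K]
      (Module.End K V ⊗[K] Module.End K W) ⊗[K] A :=
  Algebra.TensorProduct.includeLeft

/-- `S ↦ S₁₃` : the algebra embedding `End(V) ⊗ A → End(V) ⊗ End(W) ⊗ A`,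
`x ⊗ a ↦ x ⊗ 1 ⊗ a`. -/
noncomputable def emb13 :
    (Module.End K V ⊗[K] A) →ₐ[K] (Module.End K V ⊗[K] Module.End K W) ⊗[K] A :=
  Algebra.TensorProduct.map
    (Algebra.TensorProduct.includeLeft :
      Module.End K V →ₐ[K] Module.End K V ⊗[K] Module.End K W)
    (AlgHom.id K A)

/-- `T ↦ T₂₃` : the algebra embedding `End(W) ⊗ A → End(V) ⊗ End(W) ⊗ A`,
`y ⊗ a ↦ 1 ⊗ y ⊗ a`. -/
noncomputable def emb23 :
    (Module.End K W ⊗[K] A) →ₐ[K] (Module.End K V ⊗[K] Module.End K W) ⊗[K] A :=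
  Algebra.TensorProduct.map
    (Algebra.TensorProduct.includeRight :
      Module.End K W →ₐ[K] Module.End K V ⊗[K] Module.End K W)
    (AlgHom.id K A)

/-- The partial trace `τ_V : End(V) ⊗ A → A`, `x ⊗ a ↦ tr(x)·a`. -/
noncomputable def partialTrace :
    (Module.End K V ⊗[K] A) →ₗ[K] A :=
  TensorProduct.lift (LinearMap.lsmul K A ∘ₗ LinearMap.trace K V)

set_option maxHeartbeats 1000000
set_option synthInstance.maxHeartbeats 400000

section Aux

variable (K : Type*) [Field K] (A : Type*) [Ring A] [Algebra K A]
variable (V W : Type*) [AddCommGroup V] [Module K V] [AddCommGroup W] [Module K W]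

/-- Trace on `End V ⊗ End W` via the algebra map to `End (V ⊗ W)`. -/
noncomputable def tr2 : (Module.End K V ⊗[K] Module.End K W) →ₗ[K] K :=
  LinearMap.trace K (V ⊗[K] W) ∘ₗ
    (Module.endTensorEndAlgHom (R := K) (S := K) (A := K) (M := V) (N := W)).toLinearMap

lemma tr2_tmul [FiniteDimensional K V] [FiniteDimensional K W]
    (x : Module.End K V) (y : Module.End K W) :
    tr2 K V W (x ⊗ₜ[K] y) = LinearMap.trace K V x * LinearMap.trace K W y := by
  simpa [tr2, Module.endTensorEndAlgHom_apply, AlgebraTensorModule.map_eq] using LinearMap.trace_tensorProduct' x y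

lemma tr2_conj (X Y : Module.End K V ⊗[K] Module.End K W) (hXY : X * Y = 1)
    (z : Module.End K V ⊗[K] Module.End K W) :
    tr2 K V W (Y * z * X) = tr2 K V W z := by
  simp only [tr2, LinearMap.coe_comp, Function.comp_apply, AlgHom.toLinearMap_apply, map_mul]
  rw [LinearMap.trace_mul_comm, ← mul_assoc, ← map_mul, hXY, map_one, one_mul]

/-- Total trace on `(End V ⊗ End W) ⊗ A`. -/
noncomputable def totTrace : ((Module.End K V ⊗[K] Module.End K W) ⊗[K] A) →ₗ[K] A :=
  TensorProduct.lift (LinearMap.lsmul K A ∘ₗ tr2 K V W)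

lemma totTrace_tmul (z : Module.End K V ⊗[K] Module.End K W) (a : A) :
    totTrace K A V W (z ⊗ₜ[K] a) = tr2 K V W z • a := rfl

end Aux

section Aux2

variable (K : Type*) [Field K] (A : Type*) [Ring A] [Algebra K A]
variable (V W : Type*) [AddCommGroup V] [Module K V] [AddCommGroup W] [Module K W]
variable [FiniteDimensional K V] [FiniteDimensional K W]

lemma totTrace_mul13_23 (S : Module.End K V ⊗[K] A) (T : Module.End K W ⊗[K] A) :
    totTrace K A V W (emb13 K A V W S * emb23 K A V W T) =
      partialTrace K A V S * partialTrace K A W T := by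
  induction S using TensorProduct.induction_on with
  | zero => simp
  | add s₁ s₂ h₁ h₂ => simp [map_add, add_mul, h₁, h₂]
  | tmul x a =>
    induction T using TensorProduct.induction_on with
    | zero => simp
    | add t₁ t₂ h₁ h₂ => simp [map_add, mul_add, h₁, h₂]
    | tmul y b =>
      simp only [emb13, emb23, Algebra.TensorProduct.map_tmul, AlgHom.coe_id, id_eq,
        Algebra.TensorProduct.includeLeft_apply, Algebra.TensorProduct.includeRight_apply,
        Algebra.TensorProduct.tmul_mul_tmul, mul_one, one_mul,
        totTrace_tmul, tr2_tmul, partialTrace, TensorProduct.lift.tmul,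
        LinearMap.coe_comp, Function.comp_apply, LinearMap.lsmul_apply]
      rw [mul_smul, smul_mul_smul_comm]
      simp [mul_smul]

lemma totTrace_mul23_13 (S : Module.End K V ⊗[K] A) (T : Module.End K W ⊗[K] A) :
    totTrace K A V W (emb23 K A V W T * emb13 K A V W S) =
      partialTrace K A W T * partialTrace K A V S := by
  induction S using TensorProduct.induction_on with
  | zero => simp
  | add s₁ s₂ h₁ h₂ => simp [map_add, mul_add, h₁, h₂]
  | tmul x a =>
    induction T using TensorProduct.induction_on with
    | zero => simp
    | add t₁ t₂ h₁ h₂ => simp [map_add, add_mul, h₁, h₂]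
    | tmul y b =>
      simp only [emb13, emb23, Algebra.TensorProduct.map_tmul, AlgHom.coe_id, id_eq,
        Algebra.TensorProduct.includeLeft_apply, Algebra.TensorProduct.includeRight_apply,
        Algebra.TensorProduct.tmul_mul_tmul, mul_one, one_mul,
        totTrace_tmul, tr2_tmul, partialTrace, TensorProduct.lift.tmul,
        LinearMap.coe_comp, Function.comp_apply, LinearMap.lsmul_apply]
      rw [mul_comm (LinearMap.trace K V x), mul_smul, smul_mul_smul_comm]
      simp [mul_smul]

omit [FiniteDimensional K V] [FiniteDimensional K W] in
lemma totTrace_conj (X Y : Module.End K V ⊗[K] Module.End K W) (hXY : X * Y = 1)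
    (u : (Module.End K V ⊗[K] Module.End K W) ⊗[K] A) :
    totTrace K A V W (emb12 K A V W Y * u * emb12 K A V W X) = totTrace K A V W u := by
  induction u using TensorProduct.induction_on with
  | zero => simp
  | add u₁ u₂ h₁ h₂ => simp [mul_add, add_mul, map_add, h₁, h₂]
  | tmul z a =>
    have : emb12 K A V W Y * (z ⊗ₜ[K] a) * emb12 K A V W X = (Y * z * X) ⊗ₜ[K] a := by
      simp [emb12, Algebra.TensorProduct.includeLeft_apply,
        Algebra.TensorProduct.tmul_mul_tmul]
    rw [this, totTrace_tmul, totTrace_tmul, tr2_conj K V W X Y hXY]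

end Aux2

/-- Commutativity of transfer matrices: if `X₁₂ · S₁₃ · T₂₃ = T₂₃ · S₁₃ · X₁₂` with `X`
invertible, then the partial traces `τ_V(S)` and `τ_W(T)` commute in `A`. -/
theorem transfer_matrices_commute [FiniteDimensional K V] [FiniteDimensional K W]
    (X : Module.End K V ⊗[K] Module.End K W)
    (S : Module.End K V ⊗[K] A) (T : Module.End K W ⊗[K] A)
    (hX : IsUnit X)
    (hYBE : emb12 K A V W X * emb13 K A V W S * emb23 K A V W T =
      emb23 K A V W T * emb13 K A V W S * emb12 K A V W X) :
    partialTrace K A V S * partialTrace K A W T =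
      partialTrace K A W T * partialTrace K A V S := by
  have hXu : X * (↑hX.unit⁻¹ : Module.End K V ⊗[K] Module.End K W) = 1 := hX.mul_val_inv
  have hYX : (↑hX.unit⁻¹ : Module.End K V ⊗[K] Module.End K W) * X = 1 := hX.val_inv_mul
  set Y : Module.End K V ⊗[K] Module.End K W := ↑hX.unit⁻¹ with hY
  have key : emb13 K A V W S * emb23 K A V W T =
      emb12 K A V W Y * (emb23 K A V W T * emb13 K A V W S) * emb12 K A V W X := by
    calc emb13 K A V W S * emb23 K A V W T
        = emb12 K A V W Y * (emb12 K A V W X * emb13 K A V W S * emb23 K A V W T) := by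
          rw [← mul_assoc, ← mul_assoc, ← map_mul, hYX, map_one, one_mul]
      _ = emb12 K A V W Y * (emb23 K A V W T * emb13 K A V W S * emb12 K A V W X) := by
          rw [hYBE]
      _ = emb12 K A V W Y * (emb23 K A V W T * emb13 K A V W S) * emb12 K A V W X := by
          simp only [mul_assoc]
  have := congrArg (totTrace K A V W) key
  rwa [totTrace_mul13_23, totTrace_conj K A V W X Y hXu, totTrace_mul23_13] at this


end
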